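/- If a p×p real matrix C is both separable positive definite (C = Σ2 ⊛ Σ1 for some symmetric positive definite Σ1, Σ2) and a core covariance matrix (P1(C, I_{p2}) = p2·I_{p1} and P2(C, I_{p1}) = p1·I_{p2}), then C = I_p. That is, the intersection of the separable positive definite matrices and the core covariance matrices is exactly the identity matrix. -/

import Mathlib

open Matrix BigOperators Filter

/-- The separable (Kronecker) product `M2 ⊛ M1`: entry at `((i,j),(i',j'))` is
`M1 i i' * M2 j j'`. -/
noncomputable def sep {p1 p2 : ℕ} (M1 : Matrix (Fin p1) (Fin p1) ℝ)
    (M2 : Matrix (Fin p2) (Fin p2) ℝ) :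
    Matrix (Fin p1 × Fin p2) (Fin p1 × Fin p2) ℝ :=
  fun x y => M1 x.1 y.1 * M2 x.2 y.2

/-- A `p × p` matrix is separable positive definite if it is the separable product of
two symmetric positive definite matrices. -/
def SepPD {p1 p2 : ℕ} (K : Matrix (Fin p1 × Fin p2) (Fin p1 × Fin p2) ℝ) : Prop :=
  ∃ (S1 : Matrix (Fin p1) (Fin p1) ℝ) (S2 : Matrix (Fin p2) (Fin p2) ℝ),
    S1.PosDef ∧ S2.PosDef ∧ K = sep S1 S2

/-- The divergence `d(K : S) = log det K + trace (K⁻¹ S)`. -/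
noncomputable def dvg {ι : Type*} [Fintype ι] [DecidableEq ι] (K S : Matrix ι ι ℝ) : ℝ :=
  Real.log K.det + (K⁻¹ * S).trace

/-- `P1 S B` has entries `∑_{j,j'} B j j' * S (i,j) (i',j')`. -/
noncomputable def P1 {p1 p2 : ℕ} (S : Matrix (Fin p1 × Fin p2) (Fin p1 × Fin p2) ℝ)
    (B : Matrix (Fin p2) (Fin p2) ℝ) : Matrix (Fin p1) (Fin p1) ℝ :=
  fun i i' => ∑ j, ∑ j', B j j' * S (i, j) (i', j')

/-- `P2 S A` has entries `∑_{i,i'} A i i' * S (i,j) (i',j')`. -/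
noncomputable def P2 {p1 p2 : ℕ} (S : Matrix (Fin p1 × Fin p2) (Fin p1 × Fin p2) ℝ)
    (A : Matrix (Fin p1) (Fin p1) ℝ) : Matrix (Fin p2) (Fin p2) ℝ :=
  fun j j' => ∑ i, ∑ i', A i i' * S (i, j) (i', j')

lemma diag_pos_of_posDef' {n : ℕ} {M : Matrix (Fin n) (Fin n) ℝ} (h : M.PosDef) (i : Fin n) :
    0 < M i i := by
  exact h.diag_pos

theorem stmt11 (p1 p2 : ℕ) (hp1 : 0 < p1) (hp2 : 0 < p2)
    (C : Matrix (Fin p1 × Fin p2) (Fin p1 × Fin p2) ℝ)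
    (hsep : SepPD C)
    (hcore1 : P1 C (1 : Matrix (Fin p2) (Fin p2) ℝ) = (p2 : ℝ) • (1 : Matrix (Fin p1) (Fin p1) ℝ))
    (hcore2 : P2 C (1 : Matrix (Fin p1) (Fin p1) ℝ) = (p1 : ℝ) • (1 : Matrix (Fin p2) (Fin p2) ℝ)) :
    C = 1 := by
  obtain ⟨S1, S2, h1, h2, rfl⟩ := hsep
  set t1 := ∑ i, S1 i i with ht1
  set t2 := ∑ j, S2 j j with ht2
  have ht1pos : 0 < t1 := Finset.sum_pos (fun i _ => diag_pos_of_posDef' h1 i)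
    (by simp [Finset.univ_nonempty_iff, Fin.pos_iff_nonempty.mp hp1])
  have ht2pos : 0 < t2 := Finset.sum_pos (fun j _ => diag_pos_of_posDef' h2 j)
    (by simp [Finset.univ_nonempty_iff, Fin.pos_iff_nonempty.mp hp2])
  have hA : ∀ i i', S1 i i' * t2 = (p2 : ℝ) * (if i = i' then 1 else 0) := by
    intro i i'
    have := congrFun (congrFun hcore1 i) i'
    simp only [P1, sep, Matrix.one_apply, Matrix.smul_apply, smul_eq_mul] at this
    rw [← this]
    simp only [ite_mul, one_mul, zero_mul, Finset.sum_ite_eq, Finset.mem_univ, if_true]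
    rw [ht2, Finset.mul_sum]
  have hB : ∀ j j', S2 j j' * t1 = (p1 : ℝ) * (if j = j' then 1 else 0) := by
    intro j j'
    have := congrFun (congrFun hcore2 j) j'
    simp only [P2, sep, Matrix.one_apply, Matrix.smul_apply, smul_eq_mul] at this
    rw [← this]
    simp only [ite_mul, one_mul, zero_mul, Finset.sum_ite_eq, Finset.mem_univ, if_true]
    rw [ht1, Finset.mul_sum]
    exact Finset.sum_congr rfl fun x _ => mul_comm _ _
  have htt : t1 * t2 = (p1 : ℝ) * p2 := by
    have : ∑ i, S1 i i * t2 = ∑ i : Fin p1, (p2 : ℝ) * (if i = i then 1 else 0) :=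
      Finset.sum_congr rfl fun i _ => hA i i
    simpa [← Finset.sum_mul, mul_comm, mul_left_comm] using this
  funext x y
  obtain ⟨i, j⟩ := x; obtain ⟨i', j'⟩ := y
  have h1' : S1 i i' = (p2 : ℝ) * (if i = i' then 1 else 0) / t2 := by
    field_simp [← hA i i']
    exact hA i i'
  have h2' : S2 j j' = (p1 : ℝ) * (if j = j' then 1 else 0) / t1 := by
    field_simp [← hB j j', mul_comm]
    exact hB j j'
  simp only [sep, h1', h2', Matrix.one_apply, Prod.mk.injEq, Prod.ext_iff]
  rw [div_mul_div_comm]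
  rw [show t2 * t1 = (p1:ℝ)*p2 by rw [mul_comm]; exact htt]
  by_cases hii : i = i' <;> by_cases hjj : j = j' <;>
    simp [hii, hjj] <;> field_simp <;> ring
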